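/- Let Θ be an action-type, nondegenerate variety of Lie algebra representations over a field k of characteristic 0, and let F = F_Θ(x^(1), x^(2)) be the free representation on one generator of each sort. Suppose W is a system of words defining verbal operations with w_{λ^(1)} = φ(λ)x^(1), w_{λ^(2)} = ψ(λ)x^(2) for field automorphisms φ, ψ ∈ Aut(k), and w_∘ = b(x^(1) ∘ x^(2)) with b ∈ k^*. If there is a bijection s_F : F → F fixing the generators that is an isomorphism F → F*_W, then φ = ψ, derived from the identity (λx^(1)) ∘ x^(2) = x^(1) ∘ (λx^(2)) holding in F. -/

import Mathlib

open Polynomial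

set_option synthInstance.maxHeartbeats 400000

attribute [local instance 100] LieRing.ofAssociativeRing

/-- The sort-2 part `A_Θ·x⁽²⁾ = k[x]/(x^d)` of the free representation
`F_Θ(x⁽¹⁾, x⁽²⁾)` of an action-type nondegenerate variety `Θ`. -/
noncomputable abbrev AΘ (k : Type*) [Field k] (d : ℕ) : Type _ :=
  Polynomial k ⧸ Ideal.span {(X : Polynomial k) ^ d}

/-- The action of the sort-1 part (the free Lie algebra on the single generator `x⁽¹⁾`)
on `A_Θ·x⁽²⁾`, with `x⁽¹⁾` acting as multiplication by the image of `x`. -/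
noncomputable def rho (k : Type*) [Field k] (d : ℕ) :
    FreeLieAlgebra k Unit →ₗ⁅k⁆ Module.End k (AΘ k d) :=
  (Algebra.lsmul k k (AΘ k d) : AΘ k d →ₐ[k] Module.End k (AΘ k d)).toLieHom.comp
    (FreeLieAlgebra.lift k fun _ : Unit =>
      (Ideal.Quotient.mk (Ideal.span {(X : Polynomial k) ^ d}) X : AΘ k d))

/-- Let `Θ` be an action-type nondegenerate variety of Lie algebra representations over a
field `k` of characteristic `0`, and `F = F_Θ(x⁽¹⁾, x⁽²⁾)` its free representation on one
generator of each sort, whose sort-1 part is the free Lie algebra on `x⁽¹⁾` and whose sort-2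
part is `k[x]/(x^d)` with `d > 1`.  Suppose the verbal operations are given by
`w_{λ⁽¹⁾} = φ(λ)x⁽¹⁾`, `w_{λ⁽²⁾} = ψ(λ)x⁽²⁾` for field automorphisms `φ, ψ` of `k` and
`w_∘ = b(x⁽¹⁾ ∘ x⁽²⁾)` with `b ≠ 0`, the additive operations being unchanged.  If there is a
bijection `s_F = (s₁, s₂)` of `F` fixing the generators which is an isomorphism `F → F*_W`,
then `φ = ψ`. -/
theorem stmt_10 (k : Type*) [Field k] [CharZero k] (d : ℕ) (hd : 1 < d)
    (φ ψ : k ≃+* k) (b : k) (hb : b ≠ 0)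
    (s₁ : FreeLieAlgebra k Unit → FreeLieAlgebra k Unit) (s₂ : AΘ k d → AΘ k d)
    (hs₁bij : Function.Bijective s₁) (hs₂bij : Function.Bijective s₂)
    -- `s_F` fixes the generators:
    (hgen₁ : s₁ (FreeLieAlgebra.of k ()) = FreeLieAlgebra.of k ())
    (hgen₂ : s₂ (1 : AΘ k d) = 1)
    -- `s_F : F → F*_W` is a homomorphism with respect to the verbal operations:
    (hadd₁ : ∀ u v, s₁ (u + v) = s₁ u + s₁ v)
    (hadd₂ : ∀ u v, s₂ (u + v) = s₂ u + s₂ v)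
    (hsmul₁ : ∀ (c : k) (l), s₁ (c • l) = φ c • s₁ l)
    (hsmul₂ : ∀ (c : k) (v), s₂ (c • v) = ψ c • s₂ v)
    (hact : ∀ l v, s₂ (rho k d l v) = b • rho k d (s₁ l) (s₂ v)) :
    φ = ψ := by
  -- The image of `X` in `AΘ k d`
  set Xbar : AΘ k d := Ideal.Quotient.mk (Ideal.span {(X : Polynomial k) ^ d}) X with hX
  have hrho : ∀ c : k, rho k d (c • FreeLieAlgebra.of k ()) (1 : AΘ k d) = c • Xbar := by
    intro c
    have h1 : rho k d (FreeLieAlgebra.of k ()) (1 : AΘ k d) = Xbar := by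
      simp [rho, FreeLieAlgebra.lift_of_apply, Algebra.lsmul, smul_eq_mul, hX]
    rw [map_smul]
    simp [h1]
  have hXne : Xbar ≠ 0 := by
    rw [hX, Ne, Ideal.Quotient.eq_zero_iff_mem, Ideal.mem_span_singleton]
    intro h
    have := Polynomial.natDegree_le_of_dvd h X_ne_zero
    simp [Polynomial.natDegree_X_pow] at this
    omega
  have key : ∀ c : k, s₂ (rho k d (c • FreeLieAlgebra.of k ()) 1) = b • φ c • Xbar := by
    intro c
    rw [hact, hsmul₁, hgen₁, hgen₂, map_smul]
    have h1 : rho k d (FreeLieAlgebra.of k ()) (1 : AΘ k d) = Xbar := by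
      simp [rho, FreeLieAlgebra.lift_of_apply, Algebra.lsmul, smul_eq_mul, hX]
    simp [h1]
  have hsX : s₂ Xbar = b • Xbar := by
    have := key 1
    rw [hrho, one_smul, map_one] at this
    simpa using this
  ext c
  have h2 : s₂ (rho k d (c • FreeLieAlgebra.of k ()) 1) = ψ c • b • Xbar := by
    rw [hrho, hsmul₂, hsX]
  have := (key c).symm.trans h2
  rw [smul_comm] at this
  have h3 : (φ c - ψ c) • (b • Xbar) = 0 := by
    rw [sub_smul, this, sub_self]
  have hbX : b • Xbar ≠ 0 := by
    simp [smul_eq_zero, hb, hXne]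
  rcases smul_eq_zero.mp h3 with h | h
  · exact sub_eq_zero.mp h
  · exact absurd h hbX
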